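/- Let η be a Poisson point process on X with finite intensity measure λ, and let g : X × S → ℝ be bounded measurable, where S is the space of finite point configurations. Then E[∑_{x ∈ η} g(x, η \ {x})] = ∫ E[g(x, η)] λ(dx). -/

import Mathlib

open MeasureTheory

/-- The Poisson pmf with real parameter `r`. -/
noncomputable def poissonPmf (r : ℝ) (n : ℕ) : ℝ := Real.exp (-r) * r ^ n / n.factorial

theorem ofFn_eraseIdx {X : Type*} (n : ℕ) (x : Fin (n+1) → X) (i : Fin (n+1)) :
    (List.ofFn x).eraseIdx i = List.ofFn (fun j => x (i.succAbove j)) := by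
  apply List.ext_getElem
  · simp [List.length_eraseIdx, i.isLt]
  · intro j h1 h2
    simp only [List.length_ofFn] at h2
    rw [List.getElem_eraseIdx]
    simp only [List.getElem_ofFn]
    split_ifs with h h'
    · congr 1
      simp [Fin.succAbove, Fin.lt_def, h]
    · congr 1
      simp [Fin.succAbove, Fin.lt_def, h]

theorem mecke_aux {X : Type*} [MeasurableSpace X] (μ : Measure X) [IsProbabilityMeasure μ]
    (g : X → Multiset X → ℝ) (C : ℝ) (hbdd : ∀ x m, |g x m| ≤ C) (n : ℕ) (i : Fin (n+1))
    (hmeas : Measurable fun p : X × (Fin n → X) => g p.1 ↑(List.ofFn p.2)) :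
    ∫ x : Fin (n+1) → X, g (x i) ↑((List.ofFn x).eraseIdx i)
        ∂(Measure.pi fun _ => μ)
      = ∫ x, (∫ y : Fin n → X, g x ↑(List.ofFn y) ∂(Measure.pi fun _ => μ)) ∂μ := by
  calc ∫ x : Fin (n+1) → X, g (x i) ↑((List.ofFn x).eraseIdx i) ∂(Measure.pi fun _ => μ)
      = ∫ x : Fin (n+1) → X, (fun p : X × (Fin n → X) => g p.1 ↑(List.ofFn p.2))
          ((MeasurableEquiv.piFinSuccAbove (fun _ : Fin (n+1) => X) i) x)
          ∂(Measure.pi fun _ => μ) := by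
        refine integral_congr_ae (Filter.Eventually.of_forall fun x => ?_)
        simp only [MeasurableEquiv.piFinSuccAbove_apply]
        congr 1
        rw [ofFn_eraseIdx]
        rfl
    _ = ∫ p : X × (Fin n → X), g p.1 ↑(List.ofFn p.2) ∂(μ.prod (Measure.pi fun _ : Fin n => μ)) := by
        exact MeasurePreserving.integral_comp (measurePreserving_piFinSuccAbove (fun _ => μ) i)
          (MeasurableEquiv.measurableEmbedding _)
          (fun p : X × (Fin n → X) => g p.1 ↑(List.ofFn p.2))
    _ = ∫ x, (∫ y : Fin n → X, g x ↑(List.ofFn y) ∂(Measure.pi fun _ => μ)) ∂μ := by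
        refine integral_prod _ ?_
        refine Integrable.mono' (integrable_const C) hmeas.aestronglyMeasurable ?_
        exact Filter.Eventually.of_forall fun p => by simpa using hbdd p.1 _

theorem mecke_formula {X : Type*} [MeasurableSpace X] (lam : Measure X)
    [IsFiniteMeasure lam] (hc : lam Set.univ ≠ 0)
    (g : X → Multiset X → ℝ) (C : ℝ) (hbdd : ∀ x m, |g x m| ≤ C)
    (hmeas : ∀ n : ℕ, Measurable fun p : X × (Fin n → X) =>
      g p.1 ↑(List.ofFn p.2)) :
    (∑' n : ℕ, poissonPmf (lam Set.univ).toReal n *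
        ∫ x : Fin n → X, ∑ i : Fin n, g (x i) ↑((List.ofFn x).eraseIdx i)
          ∂(Measure.pi fun _ : Fin n => (lam Set.univ)⁻¹ • lam))
      = ∫ x, (∑' n : ℕ, poissonPmf (lam Set.univ).toReal n *
          ∫ y : Fin n → X, g x ↑(List.ofFn y)
            ∂(Measure.pi fun _ : Fin n => (lam Set.univ)⁻¹ • lam)) ∂lam := by
  have hne : Nonempty X := by
    by_contra h
    exact hc (by rw [Set.univ_eq_empty_iff.2 (not_nonempty_iff.1 h), measure_empty])
  have hC0 : 0 ≤ C := (abs_nonneg _).trans (hbdd (Classical.arbitrary X) 0)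
  have hfin : lam Set.univ ≠ ⊤ := measure_ne_top lam _
  set μ : Measure X := (lam Set.univ)⁻¹ • lam with hμ
  haveI : IsProbabilityMeasure μ :=
    ⟨by rw [hμ, Measure.smul_apply, smul_eq_mul, ENNReal.inv_mul_cancel hc hfin]⟩
  set c := (lam Set.univ).toReal with hcdef
  have hcpos : 0 < c := ENNReal.toReal_pos hc hfin
  set J : ℕ → ℝ := fun n =>
    ∫ x, (∫ y : Fin n → X, g x ↑(List.ofFn y) ∂(Measure.pi fun _ : Fin n => μ)) ∂μ with hJ
  -- basic facts
  have hpois_nonneg : ∀ n, 0 ≤ poissonPmf c n := fun n => by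
    unfold poissonPmf
    positivity
  have hpois_summable : Summable fun n => poissonPmf c n := by
    simpa [poissonPmf, mul_div_assoc] using (Real.summable_pow_div_factorial c).mul_left
      (Real.exp (-c))
  have hinner_bdd : ∀ (n : ℕ) (x : X),
      ‖∫ y : Fin n → X, g x ↑(List.ofFn y) ∂(Measure.pi fun _ : Fin n => μ)‖ ≤ C := by
    intro n x
    have h := norm_integral_le_of_norm_le_const (μ := Measure.pi fun _ : Fin n => μ) (C := C)
      (f := fun y : Fin n → X => g x ↑(List.ofFn y))
      (Filter.Eventually.of_forall fun y => by simpa [Real.norm_eq_abs] using hbdd x (↑(List.ofFn y)))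
    simpa using h
  have hJbdd : ∀ n, ‖J n‖ ≤ C := by
    intro n
    have h := norm_integral_le_of_norm_le_const (μ := μ) (C := C)
      (f := fun x => ∫ y : Fin n → X, g x ↑(List.ofFn y) ∂(Measure.pi fun _ : Fin n => μ))
      (Filter.Eventually.of_forall fun x => hinner_bdd n x)
    simpa using h
  have hinner_sm : ∀ n : ℕ, StronglyMeasurable fun x =>
      ∫ y : Fin n → X, g x ↑(List.ofFn y) ∂(Measure.pi fun _ : Fin n => μ) := fun n =>
    (hmeas n).stronglyMeasurable.integral_prod_right'
  -- integrability of the erase-terms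
  have hint : ∀ (n : ℕ) (i : Fin (n+1)),
      Integrable (fun x : Fin (n+1) → X => g (x i) ↑((List.ofFn x).eraseIdx i))
        (Measure.pi fun _ : Fin (n+1) => μ) := by
    intro n i
    have hm : Measurable (fun x : Fin (n+1) → X => g (x i) ↑((List.ofFn x).eraseIdx i)) := by
      have heq : (fun x : Fin (n+1) → X => g (x i) ↑((List.ofFn x).eraseIdx i)) =
          (fun p : X × (Fin n → X) => g p.1 ↑(List.ofFn p.2)) ∘
            (MeasurableEquiv.piFinSuccAbove (fun _ : Fin (n+1) => X) i) := by
        funext x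
        simp only [Function.comp_apply, MeasurableEquiv.piFinSuccAbove_apply]
        congr 1
        rw [ofFn_eraseIdx]
        rfl
      rw [heq]
      exact (hmeas n).comp (MeasurableEquiv.measurable _)
    exact Integrable.mono' (integrable_const C) hm.aestronglyMeasurable
      (Filter.Eventually.of_forall fun x => by simpa using hbdd _ _)
  -- the term-wise identity for the left-hand side
  have hLsucc : ∀ n : ℕ, poissonPmf c (n+1) *
      ∫ x : Fin (n+1) → X, ∑ i : Fin (n+1), g (x i) ↑((List.ofFn x).eraseIdx i)
        ∂(Measure.pi fun _ : Fin (n+1) => μ)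
      = c * (poissonPmf c n * J n) := by
    intro n
    have h1 : ∫ x : Fin (n+1) → X, ∑ i : Fin (n+1), g (x i) ↑((List.ofFn x).eraseIdx i)
        ∂(Measure.pi fun _ : Fin (n+1) => μ) = ((n : ℝ) + 1) * J n := by
      rw [integral_finset_sum _ (fun i _ => hint n i)]
      have h2 : ∀ i : Fin (n+1),
          ∫ x : Fin (n+1) → X, g (x i) ↑((List.ofFn x).eraseIdx i)
            ∂(Measure.pi fun _ : Fin (n+1) => μ) = J n :=
        fun i => mecke_aux μ g C hbdd n i (hmeas n)
      rw [Finset.sum_congr rfl (fun i _ => h2 i)]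
      simp [mul_comm]
    rw [h1]
    have h3 : poissonPmf c (n+1) * ((n : ℝ) + 1) = c * poissonPmf c n := by
      unfold poissonPmf
      rw [Nat.factorial_succ]
      have hne1 : ((n : ℝ) + 1) ≠ 0 := by positivity
      have hne2 : ((n.factorial : ℝ)) ≠ 0 := Nat.cast_ne_zero.2 n.factorial_ne_zero
      push_cast
      field_simp
      ring
    calc poissonPmf c (n+1) * (((n : ℝ) + 1) * J n)
        = poissonPmf c (n+1) * ((n : ℝ) + 1) * J n := by ring
      _ = c * poissonPmf c n * J n := by rw [h3]
      _ = c * (poissonPmf c n * J n) := by ring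
  -- handling the right-hand side
  have hlam : lam = (lam Set.univ) • μ := by
    rw [hμ, smul_smul, ENNReal.mul_inv_cancel hc hfin, one_smul]
  have hFint : ∀ n : ℕ, Integrable (fun x : X => poissonPmf c n *
      ∫ y : Fin n → X, g x ↑(List.ofFn y) ∂(Measure.pi fun _ : Fin n => μ)) μ := by
    intro n
    refine Integrable.mono' (integrable_const (poissonPmf c n * C))
      ((hinner_sm n).const_mul _).aestronglyMeasurable
      (Filter.Eventually.of_forall fun x => ?_)
    rw [norm_mul, Real.norm_of_nonneg (hpois_nonneg n)]
    exact mul_le_mul_of_nonneg_left (hinner_bdd n x) (hpois_nonneg n)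
  have hFnorm : Summable fun n : ℕ => ∫ x : X, ‖poissonPmf c n *
      ∫ y : Fin n → X, g x ↑(List.ofFn y) ∂(Measure.pi fun _ : Fin n => μ)‖ ∂μ := by
    refine Summable.of_nonneg_of_le (fun n => integral_nonneg fun x => norm_nonneg _)
      (fun n => ?_) (hpois_summable.mul_right C)
    calc ∫ x : X, ‖poissonPmf c n *
        ∫ y : Fin n → X, g x ↑(List.ofFn y) ∂(Measure.pi fun _ : Fin n => μ)‖ ∂μ
        ≤ ∫ _ : X, poissonPmf c n * C ∂μ := by
          refine integral_mono ((hFint n).norm) (integrable_const _) fun x => ?_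
          rw [norm_mul, Real.norm_of_nonneg (hpois_nonneg n)]
          exact mul_le_mul_of_nonneg_left (hinner_bdd n x) (hpois_nonneg n)
      _ = poissonPmf c n * C := by simp
  have hRHS : ∫ x, (∑' n : ℕ, poissonPmf c n *
      ∫ y : Fin n → X, g x ↑(List.ofFn y) ∂(Measure.pi fun _ : Fin n => μ)) ∂lam
      = ∑' n : ℕ, c * (poissonPmf c n * J n) := by
    rw [hlam, integral_smul_measure, ← hcdef, smul_eq_mul,
      ← integral_tsum_of_summable_integral_norm hFint hFnorm, ← tsum_mul_left]
    refine tsum_congr fun n => ?_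
    rw [integral_const_mul]
  rw [hRHS]
  -- handling the left-hand side
  have hL0 : poissonPmf c 0 *
      ∫ x : Fin 0 → X, ∑ i : Fin 0, g (x i) ↑((List.ofFn x).eraseIdx i)
        ∂(Measure.pi fun _ : Fin 0 => μ) = 0 := by
    simp
  have hLsummable : Summable (fun n : ℕ => poissonPmf c n *
      ∫ x : Fin n → X, ∑ i : Fin n, g (x i) ↑((List.ofFn x).eraseIdx i)
        ∂(Measure.pi fun _ : Fin n => μ)) := by
    rw [← summable_nat_add_iff 1]
    refine Summable.of_norm_bounded (g := fun n => c * (poissonPmf c n * C))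
      (((hpois_summable.mul_right C)).mul_left c) fun n => ?_
    rw [hLsucc n, norm_mul, norm_mul, Real.norm_of_nonneg hcpos.le,
      Real.norm_of_nonneg (hpois_nonneg n)]
    exact mul_le_mul_of_nonneg_left
      (mul_le_mul_of_nonneg_left (hJbdd n) (hpois_nonneg n)) hcpos.le
  rw [Summable.tsum_eq_zero_add hLsummable, hL0, zero_add]
  exact tsum_congr hLsucc
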